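/- arXiv:1109.3823 — 7 statements merged into one kernel-verified Lean document; each statement's English description precedes it below -/
import Mathlib

section
/- Let (0, a_1, ..., a_n, 0) be a concave sequence with a_i > 0 for all 1 ≤ i ≤ n. Then the sum satisfies a_1 + ... + a_n ≥ ((n+1)/2) · max_{1≤i≤n} a_i. -/
/-!
Concavity makes the forward differences `b (k + 1) - b k` nonincreasing, which gives the chord
inequality: on `[j, l]` the sequence lies above the segment joining `b j` and `b l`. Since the
sequence vanishes at `0` and `n + 1`, it dominates on each side of `i` the linear interpolation
between `0` and `b i`. Summing, the part up to `i` is at least `(i + 1) / 2 * b i`, and, by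
reflecting the sequence, the part from `i` onwards is at least `(n + 2 - i) / 2 * b i`; the two
parts overlap only in `b i`.
-/

open Finset

def IsConcaveSeq (b : ℕ → ℝ) (q : ℕ) : Prop :=
  ∀ m, m + 2 ≤ q → b (m + 1) ≥ (b m + b (m + 2)) / 2

lemma sum_natCast_range_add_one (m : ℕ) : ∑ k ∈ range (m + 1), (k : ℝ) = m * (m + 1) / 2 := by
  induction m with
  | zero => simp
  | succ m ih =>
    rw [sum_range_succ, ih]
    push_cast
    ring

namespace IsConcaveSeq

variable {b : ℕ → ℝ} {q : ℕ}

lemma mono {p : ℕ} (h : IsConcaveSeq b q) (hpq : p ≤ q) : IsConcaveSeq b p :=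
  fun m hm => h m (hm.trans hpq)

lemma reflect (h : IsConcaveSeq b q) : IsConcaveSeq (fun k => b (q - k)) q := by
  intro m hm
  have hconc := h (q - (m + 2)) (by omega)
  rw [show q - (m + 2) + 1 = q - (m + 1) by omega, show q - (m + 2) + 2 = q - m by omega]
    at hconc
  linarith

lemma antitoneOn_sub (h : IsConcaveSeq b q) :
    AntitoneOn (fun m => b (m + 1) - b m) (Set.Iio q) :=
  antitoneOn_of_add_one_le Set.ordConnected_Iio fun m _ _ hm => by
    have hconc := h m (by simp only [Set.mem_Iio] at hm; omega)
    linarith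

lemma chord_le (h : IsConcaveSeq b q) {j k l : ℕ} (hjk : j ≤ k) (hkl : k ≤ l) (hlq : l ≤ q) :
    ((l : ℝ) - k) * b j + ((k : ℝ) - j) * b l ≤ ((l : ℝ) - j) * b k := by
  rcases hkl.eq_or_lt with rfl | hkl_lt
  · linarith
  have hd := h.antitoneOn_sub
  set c := b (k + 1) - b k
  have hleft : ((k : ℝ) - j) * c ≤ b k - b j := by
    have hsum := card_nsmul_le_sum (Ico j k) (fun m => b (m + 1) - b m) c fun m hm =>
      hd (by simp only [Set.mem_Iio, mem_Ico] at hm ⊢; omega) (by simpa using hkl_lt.trans_le hlq)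
        (mem_Ico.mp hm).2.le
    rwa [sum_Ico_sub b hjk, Nat.card_Ico, nsmul_eq_mul, Nat.cast_sub hjk] at hsum
  have hright : b l - b k ≤ ((l : ℝ) - k) * c := by
    have hsum := sum_le_card_nsmul (Ico k l) (fun m => b (m + 1) - b m) c fun m hm =>
      hd (by simpa using hkl_lt.trans_le hlq) (by simp only [Set.mem_Iio, mem_Ico] at hm ⊢; omega)
        (mem_Ico.mp hm).1
    rwa [sum_Ico_sub b hkl_lt.le, Nat.card_Ico, nsmul_eq_mul, Nat.cast_sub hkl_lt.le] at hsum
  have hkj : (0 : ℝ) ≤ k - j := sub_nonneg.mpr (Nat.cast_le.mpr hjk)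
  have hlk : (0 : ℝ) ≤ l - k := sub_nonneg.mpr (Nat.cast_le.mpr hkl_lt.le)
  linear_combination mul_le_mul_of_nonneg_left hleft hlk + mul_le_mul_of_nonneg_left hright hkj

lemma mul_le_sum_range (h : IsConcaveSeq b q) (hb0 : b 0 = 0) :
    ((q : ℝ) + 1) / 2 * b q ≤ ∑ k ∈ range (q + 1), b k := by
  rcases q.eq_zero_or_pos with rfl | hq
  · simp [hb0]
  have hchord : ∀ k ∈ range (q + 1), (k : ℝ) * b q ≤ q * b k := fun k hk => by
    simpa [hb0] using h.chord_le (Nat.zero_le k) (mem_range_succ_iff.mp hk) le_rfl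
  have hsum := sum_le_sum hchord
  rw [← sum_mul, sum_natCast_range_add_one, ← mul_sum] at hsum
  refine le_of_mul_le_mul_left ?_ (Nat.cast_pos.mpr hq : (0 : ℝ) < q)
  linarith

lemma mul_le_sum_range_of_eq_zero (h : IsConcaveSeq b q) (hb0 : b 0 = 0) (hbq : b q = 0)
    {i : ℕ} (hiq : i ≤ q) : (q : ℝ) / 2 * b i ≤ ∑ k ∈ range (q + 1), b k := by
  have hinit := (h.mono hiq).mul_le_sum_range hb0
  have htail := (h.reflect.mono (Nat.sub_le q i)).mul_le_sum_range (by simpa using hbq)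
  rw [Nat.sub_sub_self hiq, range_eq_Ico, sum_Ico_reflect _ _ (by omega),
    show q + 1 - (q - i + 1) = i by omega, Nat.sub_zero, Nat.cast_sub hiq] at htail
  have hsplit := sum_range_add_sum_Ico b (show i ≤ q + 1 by omega)
  rw [sum_range_succ] at hinit
  linarith

end IsConcaveSeq

theorem concave_sum_ge_half_max_general (n : ℕ) (b : ℕ → ℝ)
    (hb0 : b 0 = 0) (hbn : b (n + 1) = 0)
    (hconc : ∀ i, i + 2 ≤ n + 1 → b (i + 1) ≥ (b i + b (i + 2)) / 2) :
    ∀ i, 1 ≤ i → i ≤ n →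
      (∑ j ∈ Finset.Icc 1 n, b j) ≥ (((n : ℝ) + 1) / 2) * b i := by
  intro i _ hin
  have hsum : ∑ j ∈ Icc 1 n, b j = ∑ j ∈ range (n + 2), b j := by
    rw [sum_range_succ, hbn, sum_range_succ', hb0, ← Ico_add_one_right_eq_Icc, sum_Ico_eq_sum_range]
    simp [add_comm]
  have hbound := IsConcaveSeq.mul_le_sum_range_of_eq_zero hconc hb0 hbn (by omega : i ≤ n + 1)
  rw [hsum, ge_iff_le]
  exact_mod_cast hbound

/-- For a concave sequence `(0, a 1, ..., a n, 0)` (given as `b`) with positive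
interior entries, the sum of the interior entries is at least `((n+1)/2)` times
their maximum. -/
theorem concave_sum_ge_half_max (n : ℕ) (b : ℕ → ℝ)
    (hb0 : b 0 = 0) (hbn : b (n + 1) = 0)
    (hpos : ∀ i, 1 ≤ i → i ≤ n → 0 < b i)
    (hconc : ∀ i, i + 2 ≤ n + 1 → b (i + 1) ≥ (b i + b (i + 2)) / 2) :
    ∀ i, 1 ≤ i → i ≤ n →
      (∑ j ∈ Finset.Icc 1 n, b j) ≥ (((n : ℝ) + 1) / 2) * b i :=
  concave_sum_ge_half_max_general n b hb0 hbn hconc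
end

section
/- Let n ≥ 4 and let (0, a_1, ..., a_n, 0) be a concave sequence with a_i > 0. Suppose the maximum C = max_i a_i is attained at some index m with 2 ≤ m ≤ n−1. Then the second-largest element of {a_1,...,a_n} is at least (2/3)·C, the third-largest element is at least (1/2)·C, and the fourth-largest element is at least (1/3)·C. -/
private lemma aux_concave (n : ℕ) (b : ℕ → ℝ) (hb0 : b 0 = 0)
    (hconc : ∀ i, i + 2 ≤ n + 1 → b (i + 1) ≥ (b i + b (i + 2)) / 2) :
    ∀ k, k ≤ n → b k ≥ (k : ℝ) * (b (k + 1) - b k) := by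
  intro k
  induction k with
  | zero => intro _; simp [hb0]
  | succ k ih =>
    intro hk
    have ihk := ih (by omega)
    have hd : b (k + 2) - b (k + 1) ≤ b (k + 1) - b k := by
      have := hconc k (by omega); linarith
    have hnn : (0 : ℝ) ≤ (k : ℝ) + 1 := by positivity
    have hmul := mul_le_mul_of_nonneg_left hd hnn
    push_cast
    nlinarith [ihk]

private lemma card_ge_two {s : Finset ℕ} {a b : ℕ} (ha : a ∈ s) (hb : b ∈ s)
    (h : a ≠ b) : 2 ≤ s.card := by
  have hsub : ({a, b} : Finset ℕ) ⊆ s := by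
    intro x hx
    simp only [Finset.mem_insert, Finset.mem_singleton] at hx
    rcases hx with rfl | rfl <;> assumption
  have hcard : ({a, b} : Finset ℕ).card = 2 := by
    rw [Finset.card_insert_of_notMem (by simp [h]), Finset.card_singleton]
  calc 2 = ({a, b} : Finset ℕ).card := hcard.symm
    _ ≤ s.card := Finset.card_le_card hsub

private lemma card_ge_three {s : Finset ℕ} {a b c : ℕ} (ha : a ∈ s) (hb : b ∈ s)
    (hc : c ∈ s) (h1 : a ≠ b) (h2 : a ≠ c) (h3 : b ≠ c) : 3 ≤ s.card := by
  have hsub : ({a, b, c} : Finset ℕ) ⊆ s := by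
    intro x hx
    simp only [Finset.mem_insert, Finset.mem_singleton] at hx
    rcases hx with rfl | rfl | rfl <;> assumption
  have hcard : ({a, b, c} : Finset ℕ).card = 3 := by
    rw [Finset.card_insert_of_notMem (by simp [h1, h2]),
      Finset.card_insert_of_notMem (by simp [h3]), Finset.card_singleton]
  calc 3 = ({a, b, c} : Finset ℕ).card := hcard.symm
    _ ≤ s.card := Finset.card_le_card hsub

private lemma card_ge_four {s : Finset ℕ} {a b c d : ℕ} (ha : a ∈ s) (hb : b ∈ s)
    (hc : c ∈ s) (hd : d ∈ s) (h1 : a ≠ b) (h2 : a ≠ c) (h3 : a ≠ d)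
    (h4 : b ≠ c) (h5 : b ≠ d) (h6 : c ≠ d) : 4 ≤ s.card := by
  have hsub : ({a, b, c, d} : Finset ℕ) ⊆ s := by
    intro x hx
    simp only [Finset.mem_insert, Finset.mem_singleton] at hx
    rcases hx with rfl | rfl | rfl | rfl <;> assumption
  have hcard : ({a, b, c, d} : Finset ℕ).card = 4 := by
    rw [Finset.card_insert_of_notMem (by simp [h1, h2, h3]),
      Finset.card_insert_of_notMem (by simp [h4, h5]),
      Finset.card_insert_of_notMem (by simp [h6]), Finset.card_singleton]
  calc 4 = ({a, b, c, d} : Finset ℕ).card := hcard.symm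
    _ ≤ s.card := Finset.card_le_card hsub

set_option maxHeartbeats 1600000 in
/-- Interior maximum case: if `n ≥ 4`, `(0, a 1, ..., a n, 0)` (given as `b`) is
concave with positive interior entries, and the maximum `C` is attained at some
index `m` with `2 ≤ m ≤ n - 1`, then there are at least 2 entries `≥ (2/3)·C`,
at least 3 entries `≥ (1/2)·C` and at least 4 entries `≥ (1/3)·C`; i.e. the
second-, third- and fourth-largest elements are at least `(2/3)·C`, `(1/2)·C`
and `(1/3)·C`, respectively. -/
theorem concave_interior_max_order_stats (n : ℕ) (hn : 4 ≤ n) (b : ℕ → ℝ)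
    (C : ℝ) (m : ℕ)
    (hb0 : b 0 = 0) (hbn : b (n + 1) = 0)
    (hpos : ∀ i, 1 ≤ i → i ≤ n → 0 < b i)
    (hconc : ∀ i, i + 2 ≤ n + 1 → b (i + 1) ≥ (b i + b (i + 2)) / 2)
    (hm1 : 2 ≤ m) (hmn : m ≤ n - 1)
    (hmax : ∀ i, 1 ≤ i → i ≤ n → b i ≤ C) (hC : b m = C) :
    2 ≤ ((Finset.Icc 1 n).filter (fun i => (2 / 3 : ℝ) * C ≤ b i)).card ∧
    3 ≤ ((Finset.Icc 1 n).filter (fun i => (1 / 2 : ℝ) * C ≤ b i)).card ∧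
    4 ≤ ((Finset.Icc 1 n).filter (fun i => (1 / 3 : ℝ) * C ≤ b i)).card := by
  obtain ⟨p, rfl⟩ : ∃ p, m = p + 2 := ⟨m - 2, by omega⟩
  obtain ⟨r, rfl⟩ : ∃ r, n = p + r + 3 := ⟨n - p - 3, by omega⟩
  -- reversed sequence
  set c : ℕ → ℝ := fun j => b (p + r + 3 + 1 - j) with hc_def
  have hc0 : c 0 = 0 := by simp [hc_def, hbn]
  have hconc_c : ∀ i, i + 2 ≤ p + r + 3 + 1 → c (i + 1) ≥ (c i + c (i + 2)) / 2 := by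
    intro i hi
    have h := hconc (p + r + 3 - 1 - i) (by omega)
    have e1 : p + r + 3 - 1 - i + 1 = p + r + 3 + 1 - (i + 1) := by omega
    have e2 : p + r + 3 - 1 - i + 2 = p + r + 3 + 1 - i := by omega
    have e3 : p + r + 3 - 1 - i = p + r + 3 + 1 - (i + 2) := by omega
    rw [e1, e2, e3] at h
    simp only [hc_def]
    linarith
  have hauxb := aux_concave (p + r + 3) b hb0 hconc
  have hauxc := aux_concave (p + r + 3) c hc0 hconc_c
  -- key inequalities
  have A := hauxb (p + 1) (by omega)
  have B := hauxc (r + 1) (by omega)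
  have ecB1 : c (r + 1) = b (p + 3) := by simp only [hc_def]; congr 1 <;> omega
  have ecB2 : c (r + 1 + 1) = b (p + 2) := by simp only [hc_def]; congr 1 <;> omega
  rw [ecB1, ecB2] at B
  have hC0 : 0 < C := hC ▸ hpos (p + 2) (by omega) (by omega)
  have hu : 0 < b (p + 1) := hpos (p + 1) (by omega) (by omega)
  have hv : 0 < b (p + 3) := hpos (p + 3) (by omega) (by omega)
  have hP : (0 : ℝ) ≤ (p : ℝ) := Nat.cast_nonneg p
  have hR : (0 : ℝ) ≤ (r : ℝ) := Nat.cast_nonneg r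
  push_cast at A B
  rw [hC] at A B
  -- (P+2) * b(p+1) ≥ (P+1) * C ;  (R+2) * b(p+3) ≥ (R+1) * C
  have hA : ((p : ℝ) + 2) * b (p + 1) ≥ ((p : ℝ) + 1) * C := by nlinarith
  have hB : ((r : ℝ) + 2) * b (p + 3) ≥ ((r : ℝ) + 1) * C := by nlinarith
  have hhalf_u : (1 / 2 : ℝ) * C ≤ b (p + 1) := by nlinarith
  have hhalf_v : (1 / 2 : ℝ) * C ≤ b (p + 3) := by nlinarith
  have hthird_u : (1 / 3 : ℝ) * C ≤ b (p + 1) := by linarith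
  have hthird_v : (1 / 3 : ℝ) * C ≤ b (p + 3) := by linarith
  have hCm : (1 / 3 : ℝ) * C ≤ b (p + 2) := by rw [hC]; linarith
  have hmem : ∀ i (x : ℝ), 1 ≤ i → i ≤ p + r + 3 → x ≤ b i →
      i ∈ (Finset.Icc 1 (p + r + 3)).filter (fun i => x ≤ b i) := by
    intro i x h1 h2 h3
    simp only [Finset.mem_filter, Finset.mem_Icc]
    exact ⟨⟨h1, h2⟩, h3⟩
  refine ⟨?_, ?_, ?_⟩
  · -- two entries ≥ (2/3) C
    rcases Nat.eq_zero_or_pos p with hp0 | hp1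
    · -- p = 0, so r ≥ 1 is automatic here? n = r+3 ≥ 4 so r ≥ 1
      subst hp0
      have hr1 : 1 ≤ r := by omega
      have hv23 : (2 / 3 : ℝ) * C ≤ b (0 + 3) := by
        have hR1 : (1 : ℝ) ≤ (r : ℝ) := by exact_mod_cast hr1
        nlinarith
      exact card_ge_two (hmem (0 + 3) ((2 / 3 : ℝ) * C) (by omega) (by omega) hv23)
        (hmem (0 + 2) ((2 / 3 : ℝ) * C) (by omega) (by omega) (by rw [hC]; linarith)) (by omega)
    · have hP1 : (1 : ℝ) ≤ (p : ℝ) := by exact_mod_cast hp1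
      have hu23 : (2 / 3 : ℝ) * C ≤ b (p + 1) := by nlinarith
      exact card_ge_two (hmem (p + 1) ((2 / 3 : ℝ) * C) (by omega) (by omega) hu23)
        (hmem (p + 2) ((2 / 3 : ℝ) * C) (by omega) (by omega) (by rw [hC]; linarith)) (by omega)
  · exact card_ge_three (hmem (p + 1) ((1 / 2 : ℝ) * C) (by omega) (by omega) hhalf_u)
      (hmem (p + 2) ((1 / 2 : ℝ) * C) (by omega) (by omega) (by rw [hC]; linarith))
      (hmem (p + 3) ((1 / 2 : ℝ) * C) (by omega) (by omega) hhalf_v) (by omega) (by omega) (by omega)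
  · rcases Nat.eq_zero_or_pos p with hp0 | hp1
    · -- fourth index is p + 4 = m + 2, using r ≥ 1
      subst hp0
      have hr1 : 1 ≤ r := by omega
      have hR1 : (1 : ℝ) ≤ (r : ℝ) := by exact_mod_cast hr1
      have B' := hauxc r (by omega)
      have ec1 : c r = b (0 + 4) := by simp only [hc_def]; congr 1 <;> omega
      have ec2 : c (r + 1) = b (0 + 3) := by simp only [hc_def]; congr 1 <;> omega
      rw [ec1, ec2] at B'
      push_cast at B'
      -- B' : b 4 ≥ r * (b 3 - b 4)
      have hw : (1 / 3 : ℝ) * C ≤ b (0 + 4) := by nlinarith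
      exact card_ge_four (hmem (0 + 1) ((1 / 3 : ℝ) * C) (by omega) (by omega) hthird_u)
        (hmem (0 + 2) ((1 / 3 : ℝ) * C) (by omega) (by omega) hCm)
        (hmem (0 + 3) ((1 / 3 : ℝ) * C) (by omega) (by omega) hthird_v)
        (hmem (0 + 4) ((1 / 3 : ℝ) * C) (by omega) (by omega) hw)
        (by omega) (by omega) (by omega) (by omega) (by omega) (by omega)
    · -- fourth index is p = m - 2, using p ≥ 1
      have hP1 : (1 : ℝ) ≤ (p : ℝ) := by exact_mod_cast hp1
      have A' := hauxb p (by omega)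
      -- A' : b p ≥ p * (b (p+1) - b p)
      have hw : (1 / 3 : ℝ) * C ≤ b p := by nlinarith
      exact card_ge_four (hmem p ((1 / 3 : ℝ) * C) (by omega) (by omega) hw)
        (hmem (p + 1) ((1 / 3 : ℝ) * C) (by omega) (by omega) hthird_u)
        (hmem (p + 2) ((1 / 3 : ℝ) * C) (by omega) (by omega) hCm)
        (hmem (p + 3) ((1 / 3 : ℝ) * C) (by omega) (by omega) hthird_v)
        (by omega) (by omega) (by omega) (by omega) (by omega) (by omega)
end

section
/- Let n ≥ 4 and let (0, a_1, ..., a_n, 0) be a concave sequence with a_i > 0. Suppose the maximum C = max_i a_i is attained at the first index, i.e. C = a_1. Then the second-largest element of {a_1,...,a_n} is at least (3/4)·C, the third-largest element is at least (1/2)·C, and the fourth-largest element is at least (1/4)·C. -/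
private lemma concave_diff_anti (n : ℕ) (b : ℕ → ℝ)
    (hconc : ∀ i, i + 2 ≤ n + 1 → b (i + 1) ≥ (b i + b (i + 2)) / 2) :
    ∀ j i, i ≤ j → j ≤ n → b (j + 1) - b j ≤ b (i + 1) - b i := by
  intro j
  induction j with
  | zero => intro i hi _; interval_cases i; exact le_rfl
  | succ m ih =>
    intro i hi hj
    rcases Nat.eq_or_lt_of_le hi with rfl | hlt
    · exact le_rfl
    · have h1 : b (m + 1 + 1) - b (m + 1) ≤ b (m + 1) - b m := by
        have := hconc m (by omega); linarith
      have h2 := ih i (by omega) (by omega)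
      linarith

private lemma concave_chord (n : ℕ) (b : ℕ → ℝ)
    (hconc : ∀ i, i + 2 ≤ n + 1 → b (i + 1) ≥ (b i + b (i + 2)) / 2) :
    ∀ m t, t + m ≤ n + 1 → b (t + m) - b t ≤ (m : ℝ) * (b (t + 1) - b t) := by
  intro m
  induction m with
  | zero => intro t _; simp
  | succ m ih =>
    intro t ht
    have h1 := ih t (by omega)
    have h2 : b (t + m + 1) - b (t + m) ≤ b (t + 1) - b t :=
      concave_diff_anti n b hconc (t + m) t (by omega) (by omega)
    have : b (t + (m + 1)) = b (t + m + 1) := by ring_nf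
    push_cast
    rw [this]
    linarith

/-- Endpoint maximum case: if `n ≥ 4`, `(0, a 1, ..., a n, 0)` (given as `b`) is
concave with positive interior entries, and the maximum `C` is attained at the
first index, then there are at least 2 entries `≥ (3/4)·C`, at least 3 entries
`≥ (1/2)·C` and at least 4 entries `≥ (1/4)·C`; i.e. the second-, third- and
fourth-largest elements are at least `(3/4)·C`, `(1/2)·C` and `(1/4)·C`. -/
theorem concave_endpoint_max_order_stats (n : ℕ) (hn : 4 ≤ n) (b : ℕ → ℝ)
    (C : ℝ)
    (hb0 : b 0 = 0) (hbn : b (n + 1) = 0)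
    (hpos : ∀ i, 1 ≤ i → i ≤ n → 0 < b i)
    (hconc : ∀ i, i + 2 ≤ n + 1 → b (i + 1) ≥ (b i + b (i + 2)) / 2)
    (hmax : ∀ i, 1 ≤ i → i ≤ n → b i ≤ C) (hC : b 1 = C) :
    2 ≤ ((Finset.Icc 1 n).filter (fun i => (3 / 4 : ℝ) * C ≤ b i)).card ∧
    3 ≤ ((Finset.Icc 1 n).filter (fun i => (1 / 2 : ℝ) * C ≤ b i)).card ∧
    4 ≤ ((Finset.Icc 1 n).filter (fun i => (1 / 4 : ℝ) * C ≤ b i)).card := by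
  obtain ⟨k, rfl⟩ : ∃ k, n = k + 4 := ⟨n - 4, by omega⟩
  have hC0 : 0 < C := hC ▸ hpos 1 le_rfl (by omega)
  have hk : (0 : ℝ) ≤ (k : ℝ) := Nat.cast_nonneg k
  -- chord inequalities: b (n+1) - b t ≤ (n+1-t) * (b (t+1) - b t)
  have hch2 : - b 2 ≤ ((k : ℝ) + 3) * (b 3 - b 2) := by
    have h := concave_chord (k + 4) b hconc (k + 3) 2 (by omega)
    have e : 2 + (k + 3) = k + 4 + 1 := by omega
    rw [e, hbn] at h
    push_cast at h ⊢; linarith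
  have hch3 : - b 3 ≤ ((k : ℝ) + 2) * (b 4 - b 3) := by
    have h := concave_chord (k + 4) b hconc (k + 2) 3 (by omega)
    have e : 3 + (k + 2) = k + 4 + 1 := by omega
    rw [e, hbn] at h
    push_cast at h ⊢; linarith
  have hch4 : - b 4 ≤ ((k : ℝ) + 1) * (b 5 - b 4) := by
    have h := concave_chord (k + 4) b hconc (k + 1) 4 (by omega)
    have e : 4 + (k + 1) = k + 4 + 1 := by omega
    rw [e, hbn] at h
    push_cast at h ⊢; linarith
  -- antitone differences among first few
  have ha12 := concave_diff_anti (k + 4) b hconc 2 1 (by omega) (by omega)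
  have ha13 := concave_diff_anti (k + 4) b hconc 3 1 (by omega) (by omega)
  have ha23 := concave_diff_anti (k + 4) b hconc 3 2 (by omega) (by omega)
  have ha14 := concave_diff_anti (k + 4) b hconc 4 1 (by omega) (by omega)
  have ha24 := concave_diff_anti (k + 4) b hconc 4 2 (by omega) (by omega)
  have ha34 := concave_diff_anti (k + 4) b hconc 4 3 (by omega) (by omega)
  -- the key order statistics bounds
  have hb2 : (3 / 4 : ℝ) * C ≤ b 2 := by nlinarith [ha12, hch2, hC]
  have hb3 : (1 / 2 : ℝ) * C ≤ b 3 := by nlinarith [ha13, ha23, hch3, hC]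
  have hb4 : (1 / 4 : ℝ) * C ≤ b 4 := by
    nlinarith [ha14, ha24, ha34, hch4, hC]
  have hb1 : ∀ r : ℝ, r ≤ 1 → r * C ≤ b 1 := fun r hr => by
    rw [hC]; nlinarith
  refine ⟨?_, ?_, ?_⟩
  · have hsub : ({1, 2} : Finset ℕ) ⊆
        (Finset.Icc 1 (k + 4)).filter (fun i => (3 / 4 : ℝ) * C ≤ b i) := by
      intro x hx
      simp only [Finset.mem_insert, Finset.mem_singleton] at hx
      refine Finset.mem_filter.mpr ⟨Finset.mem_Icc.mpr ⟨by omega, by omega⟩, ?_⟩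
      rcases hx with rfl | rfl <;> first
        | exact hb1 _ (by norm_num)
        | linarith [hb2, hb3, hb4, hC0]
    calc 2 = ({1, 2} : Finset ℕ).card := by decide
    _ ≤ _ := Finset.card_le_card hsub
  · have hsub : ({1, 2, 3} : Finset ℕ) ⊆
        (Finset.Icc 1 (k + 4)).filter (fun i => (1 / 2 : ℝ) * C ≤ b i) := by
      intro x hx
      simp only [Finset.mem_insert, Finset.mem_singleton] at hx
      refine Finset.mem_filter.mpr ⟨Finset.mem_Icc.mpr ⟨by omega, by omega⟩, ?_⟩
      rcases hx with rfl | rfl | rfl <;> first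
        | exact hb1 _ (by norm_num)
        | linarith [hb2, hb3, hb4, hC0]
    calc 3 = ({1, 2, 3} : Finset ℕ).card := by decide
    _ ≤ _ := Finset.card_le_card hsub
  · have hsub : ({1, 2, 3, 4} : Finset ℕ) ⊆
        (Finset.Icc 1 (k + 4)).filter (fun i => (1 / 4 : ℝ) * C ≤ b i) := by
      intro x hx
      simp only [Finset.mem_insert, Finset.mem_singleton] at hx
      refine Finset.mem_filter.mpr ⟨Finset.mem_Icc.mpr ⟨by omega, by omega⟩, ?_⟩
      rcases hx with rfl | rfl | rfl | rfl <;> first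
        | exact hb1 _ (by norm_num)
        | linarith [hb2, hb3, hb4, hC0]
    calc 4 = ({1, 2, 3, 4} : Finset ℕ).card := by decide
    _ ≤ _ := Finset.card_le_card hsub
end

section
/- Let n ≥ 2 and 0 < c ≤ C be real numbers. Then the maximum over all nonzero x ∈ ℝⁿ with x_1 + ... + x_n = 0 of the Rayleigh quotient (C·x_1² + c·(x_2² + ... + x_n²)) / (x_1² + ... + x_n²) equals ((n−1)/n)·C + (1/n)·c. -/
/-- The maximum of the Rayleigh quotient `(C·x₁² + c·(x₂² + ... + xₙ²)) / ‖x‖²`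
over nonzero `x` in the hyperplane `{Σ xᵢ = 0}` equals `((n-1)/n)·C + c/n`. -/
theorem rayleigh_quotient_two_values (n : ℕ) (hn : 2 ≤ n) (c C : ℝ)
    (hc : 0 < c) (hcC : c ≤ C) :
    IsGreatest
      {r : ℝ | ∃ x : Fin n → ℝ, x ≠ 0 ∧ (∑ i, x i) = 0 ∧
        r = (C * (x ⟨0, by omega⟩) ^ 2 +
              c * ∑ i ∈ Finset.univ.erase ⟨0, by omega⟩, (x i) ^ 2) /
            (∑ i, (x i) ^ 2)}
      (((n : ℝ) - 1) / n * C + c / n) := by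
  have hn0 : (0 : ℝ) < n := by positivity
  have hn1 : (1 : ℝ) ≤ (n : ℝ) - 1 := by
    have : (2 : ℝ) ≤ n := by exact_mod_cast hn
    linarith
  set i0 : Fin n := ⟨0, by omega⟩ with hi0
  have hcard : (Finset.univ.erase i0).card = n - 1 := by
    rw [Finset.card_erase_of_mem (Finset.mem_univ _), Finset.card_univ, Fintype.card_fin]
  have hcardR : ((Finset.univ.erase i0).card : ℝ) = (n : ℝ) - 1 := by
    rw [hcard]; push_cast [Nat.cast_sub (by omega : 1 ≤ n)]; ring
  constructor
  · -- membership: witness x i0 = n-1, else -1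
    set y : Fin n → ℝ := fun i => if i = i0 then (n : ℝ) - 1 else -1 with hy
    have hsum1 : ∑ i ∈ Finset.univ.erase i0, y i = ((n : ℝ) - 1) * (-1) := by
      calc ∑ i ∈ Finset.univ.erase i0, y i = ∑ _i ∈ Finset.univ.erase i0, (-1 : ℝ) :=
            Finset.sum_congr rfl fun i hi => by simp [hy, Finset.ne_of_mem_erase hi]
        _ = ((n : ℝ) - 1) * (-1) := by rw [Finset.sum_const, nsmul_eq_mul, hcardR]
    have hsum2 : ∑ i ∈ Finset.univ.erase i0, (y i) ^ 2 = (n : ℝ) - 1 := by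
      calc ∑ i ∈ Finset.univ.erase i0, (y i) ^ 2
            = ∑ _i ∈ Finset.univ.erase i0, ((-1 : ℝ)) ^ 2 :=
            Finset.sum_congr rfl fun i hi => by simp [hy, Finset.ne_of_mem_erase hi]
        _ = (n : ℝ) - 1 := by rw [Finset.sum_const, nsmul_eq_mul, hcardR]; norm_num
    refine ⟨y, ?_, ?_, ?_⟩
    · intro h
      have := congrFun h i0
      simp [hy] at this
      linarith
    · rw [← Finset.add_sum_erase _ _ (Finset.mem_univ i0), hsum1]
      simp [hy]
    · rw [← Finset.add_sum_erase _ (fun i => (y i) ^ 2) (Finset.mem_univ i0), hsum2]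
      have hyi0 : y i0 = (n : ℝ) - 1 := by simp [hy]
      rw [hyi0]
      have hne : ((n : ℝ) - 1) ^ 2 + ((n : ℝ) - 1) ≠ 0 := by nlinarith
      field_simp
      ring
  · rintro r ⟨x, hx0, hsum, rfl⟩
    set S' : ℝ := ∑ i ∈ Finset.univ.erase i0, (x i) ^ 2 with hS'
    have hsplit : ∑ i, (x i) ^ 2 = (x i0) ^ 2 + S' := by
      rw [← Finset.add_sum_erase _ (fun i => (x i) ^ 2) (Finset.mem_univ i0)]
    have hS'nonneg : 0 ≤ S' := Finset.sum_nonneg fun i _ => sq_nonneg _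
    have hSpos : 0 < ∑ i, (x i) ^ 2 := by
      rcases Function.ne_iff.1 hx0 with ⟨j, hj⟩
      simp only [Pi.zero_apply] at hj
      have : 0 < (x j) ^ 2 := (sq_nonneg _).lt_of_ne (Ne.symm (pow_ne_zero 2 hj))
      exact Finset.sum_pos' (fun i _ => sq_nonneg _) ⟨j, Finset.mem_univ _, this⟩
    have hxsum : x i0 = - ∑ i ∈ Finset.univ.erase i0, x i := by
      have := Finset.add_sum_erase _ x (Finset.mem_univ i0)
      rw [hsum] at this; linarith
    have hCS : (x i0) ^ 2 ≤ ((n : ℝ) - 1) * S' := by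
      have h := sq_sum_le_card_mul_sum_sq (s := Finset.univ.erase i0) (f := x)
      rw [hcardR] at h
      calc (x i0) ^ 2 = (∑ i ∈ Finset.univ.erase i0, x i) ^ 2 := by rw [hxsum]; ring
        _ ≤ ((n : ℝ) - 1) * S' := h
    rw [div_le_iff₀ hSpos, hsplit]
    have key : (n : ℝ) * (C * (x i0) ^ 2 + c * S')
        ≤ (((n : ℝ) - 1) * C + c) * ((x i0) ^ 2 + S') := by
      nlinarith [mul_nonneg (sub_nonneg.2 hcC) (sub_nonneg.2 hCS)]
    rw [show ((n : ℝ) - 1) / n * C + c / n = (((n : ℝ) - 1) * C + c) / n by ring,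
      div_mul_eq_mul_div, le_div_iff₀ hn0]
    linarith [key]
end

section
/- Let n ≥ 2 and let σ_1², ..., σ_n² be positive reals with largest element C and second-largest element c. Then M_1 := sup over nonzero x ∈ ℝⁿ with Σ x_i = 0 of (Σ_i σ_i² x_i²)/(Σ_i x_i²) satisfies M_1 ≤ ((n−1)/n)·C + (1/n)·c. -/
/-!
Split off a largest weight `σ i₀ ≤ C` and bound the others by `c`. On the hyperplane `∑ xᵢ = 0`
we have `x i₀ = -∑_{i ≠ i₀} xᵢ`, so Cauchy–Schwarz gives `x i₀² ≤ (n - 1) ∑_{i ≠ i₀} xᵢ²`: the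
coordinate carrying the large weight holds at most a fraction `(n - 1)/n` of the total mass
`∑ xᵢ²`, and since `c ≤ C` the weighted sum is maximised when it holds exactly that fraction.
-/

open Finset

variable {ι : Type*} [Fintype ι] [DecidableEq ι]

theorem sq_le_card_sub_one_mul_sum_erase_sq {x : ι → ℝ} (hx : ∑ i, x i = 0) (i₀ : ι) :
    x i₀ ^ 2 ≤ (Fintype.card ι - 1 : ℝ) * ∑ i ∈ univ.erase i₀, x i ^ 2 := by
  have hx₀ : x i₀ = -∑ i ∈ univ.erase i₀, x i := by
    rw [← add_sum_erase _ _ (mem_univ i₀)] at hx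
    linarith
  have hcard : ((univ.erase i₀).card : ℝ) = Fintype.card ι - 1 := by
    rw [card_erase_of_mem (mem_univ i₀), card_univ,
      Nat.cast_sub (Fintype.card_pos_iff.mpr ⟨i₀⟩), Nat.cast_one]
  rw [hx₀, neg_sq, ← hcard]
  exact sq_sum_le_card_mul_sum_sq

theorem sum_mul_sq_le_of_le_erase {σ x : ι → ℝ} {C c : ℝ} (i₀ : ι) (h₀ : σ i₀ ≤ C)
    (h : ∀ i ≠ i₀, σ i ≤ c) :
    ∑ i, σ i * x i ^ 2 ≤ C * x i₀ ^ 2 + c * ∑ i ∈ univ.erase i₀, x i ^ 2 := by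
  rw [← add_sum_erase _ _ (mem_univ i₀), mul_sum]
  gcongr with i hi
  exact h i (ne_of_mem_erase hi)

theorem mul_add_mul_le_of_le_sub_one_mul {n a b C c : ℝ} (hn : 0 < n) (hcC : c ≤ C)
    (hab : a ≤ (n - 1) * b) :
    C * a + c * b ≤ ((n - 1) / n * C + c / n) * (a + b) := by
  have key : (C - c) * a ≤ (C - c) * ((n - 1) * b) :=
    mul_le_mul_of_nonneg_left hab (sub_nonneg.mpr hcC)
  have hgap : ((n - 1) / n * C + c / n) * (a + b) - (C * a + c * b) =
      ((C - c) * ((n - 1) * b) - (C - c) * a) / n := by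
    field_simp
    ring
  exact sub_nonneg.mp (hgap ▸ div_nonneg (sub_nonneg.mpr key) hn.le)

theorem sum_mul_sq_le_of_sum_eq_zero {σ x : ι → ℝ} {C c : ℝ} (i₀ : ι) (h₀ : σ i₀ ≤ C)
    (h : ∀ i ≠ i₀, σ i ≤ c) (hcC : c ≤ C) (hx : ∑ i, x i = 0) :
    ∑ i, σ i * x i ^ 2 ≤
      ((Fintype.card ι - 1 : ℝ) / Fintype.card ι * C + c / Fintype.card ι) * ∑ i, x i ^ 2 := by
  rw [← add_sum_erase univ (fun i ↦ x i ^ 2) (mem_univ i₀)]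
  exact (sum_mul_sq_le_of_le_erase i₀ h₀ h).trans <|
    mul_add_mul_le_of_le_sub_one_mul (Nat.cast_pos.mpr (Fintype.card_pos_iff.mpr ⟨i₀⟩)) hcC
      (sq_le_card_sub_one_mul_sum_erase_sq hx i₀)

theorem rayleigh_quotient_le_M2_general (n : ℕ) (σsq : Fin n → ℝ)
    (C c : ℝ)
    (i₀ : Fin n)
    (hCmax : ∀ i, σsq i ≤ C)
    (hc2 : ∀ i, i ≠ i₀ → σsq i ≤ c)
    (hc_att : ∃ i, i ≠ i₀ ∧ σsq i = c) :
    ∀ x : Fin n → ℝ, x ≠ 0 → (∑ i, x i) = 0 →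
      (∑ i, σsq i * (x i) ^ 2) ≤
        (((n : ℝ) - 1) / n * C + c / n) * ∑ i, (x i) ^ 2 := by
  intro x _ hx
  obtain ⟨j, -, hj⟩ := hc_att
  simpa using sum_mul_sq_le_of_sum_eq_zero i₀ (hCmax i₀) hc2 (hj ▸ hCmax j) hx

/-- If `C` is the largest and `c` the second-largest (with multiplicity) of the
positive reals `σsq 1, ..., σsq n`, then the constrained Rayleigh quotient on
the hyperplane `{Σ xᵢ = 0}` is at most `((n-1)/n)·C + c/n`. -/
theorem rayleigh_quotient_le_M2 (n : ℕ) (hn : 2 ≤ n) (σsq : Fin n → ℝ)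
    (hpos : ∀ i, 0 < σsq i) (C c : ℝ)
    (i₀ : Fin n) (hi₀ : σsq i₀ = C)
    (hCmax : ∀ i, σsq i ≤ C)
    (hc2 : ∀ i, i ≠ i₀ → σsq i ≤ c)
    (hc_att : ∃ i, i ≠ i₀ ∧ σsq i = c) :
    ∀ x : Fin n → ℝ, x ≠ 0 → (∑ i, x i) = 0 →
      (∑ i, σsq i * (x i) ^ 2) ≤
        (((n : ℝ) - 1) / n * C + c / n) * ∑ i, (x i) ^ 2 :=
  rayleigh_quotient_le_M2_general n σsq C c i₀ hCmax hc2 hc_att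
end

section
/- Let n = 4 and (σ_1², σ_2², σ_3², σ_4²) = (C, (3/4)C, (1/2)C, (1/4)C) for some C > 0. Then the supremum over nonzero x ∈ ℝ⁴ with x_1+x_2+x_3+x_4 = 0 of (Σ_i σ_i² x_i²)/(Σ_i x_i²) is strictly less than (15/16)·C. -/
/-- For `n = 4` and `(σ₁², σ₂², σ₃², σ₄²) = (C, (3/4)C, (1/2)C, (1/4)C)`, the
supremum of the constrained Rayleigh quotient over nonzero `x` with
`x₁+x₂+x₃+x₄ = 0` is strictly less than `(15/16)·C`. -/
theorem rayleigh_quotient_strict_boundary_case (C : ℝ) (hC : 0 < C) :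
    sSup {r : ℝ | ∃ x : Fin 4 → ℝ, x ≠ 0 ∧ (∑ i, x i) = 0 ∧
        r = (∑ i, (![C, (3 / 4) * C, (1 / 2) * C, (1 / 4) * C] i) * (x i) ^ 2) /
            (∑ i, (x i) ^ 2)}
      < (15 / 16) * C := by
  have hb : (23 / 25 : ℝ) * C < (15 / 16) * C := by nlinarith
  refine lt_of_le_of_lt ?_ hb
  apply Real.sSup_le
  · rintro r ⟨x, hx0, hsum, rfl⟩
    have hden : (0 : ℝ) < ∑ i, (x i) ^ 2 := by
      rcases Function.ne_iff.mp hx0 with ⟨i, hi⟩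
      rw [Fin.sum_univ_four]
      fin_cases i <;> simp at hi <;> positivity
    rw [div_le_iff₀ hden]
    rw [Fin.sum_univ_four] at hsum ⊢
    rw [Fin.sum_univ_four]
    simp only [Matrix.cons_val_zero, Matrix.cons_val_one, Matrix.head_cons,
      Matrix.cons_val_two, Matrix.tail_cons, Matrix.cons_val_three]
    have h1 : x 0 = -(x 1 + x 2 + x 3) := by linarith
    rw [h1]
    nlinarith [mul_nonneg hC.le (sq_nonneg (9 * x 1 - 8 * x 2 - 8 * x 3)),
      mul_nonneg hC.le (sq_nonneg (121 * x 2 - 68 * x 3)),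
      mul_nonneg hC.le (sq_nonneg (x 3))]
  · positivity
end

section
/- Let n ≥ 4 and let σ_1², ..., σ_n² be positive reals such that the sequence (0, σ_1², ..., σ_n², 0) is concave. Then ((n−1)/n) Σ_{i=1}^n σ_i² > 2 · sup over nonzero x ∈ ℝⁿ with Σ x_i = 0 of (Σ_i σ_i² x_i²)/(Σ_i x_i²). -/
/-!
A sequence concave on `{0, …, N}` satisfies `b 0 + b N ≤ b i + b (N - i)`, and summing over `i` gives
the trapezoid bound `(N + 1) (b 0 + b N) ≤ 2 ∑ b i`. Applied on `[0, m]` and on `[m, n + 1]`, where the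
outer endpoints vanish, it yields `(n + 1) σ_m² ≤ 2 ∑ σ_i²`; for `n ≥ 5` this puts every weight, hence
every Rayleigh quotient, strictly below `(n - 1) / (2 n) ∑ σ_i²`.

For `n = 4` the weights alone do not suffice (`σ² = (1, 2, 3, 4)`) and the constraint `∑ xᵢ = 0` is
needed. The inequality is linear in `σ²`, which is a nonnegative combination of the four tents of
length 4, and for each tent it is an explicit quadratic inequality on the hyperplane.

In both cases the strict inequality passes to the supremum because the Rayleigh quotient attains its
maximum on the compact unit sphere of the hyperplane.
-/

open Finset

def ConcaveUpTo (N : ℕ) (b : ℕ → ℝ) : Prop :=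
  ∀ i, i + 2 ≤ N → (b i + b (i + 2)) / 2 ≤ b (i + 1)

namespace ConcaveUpTo

variable {N : ℕ} {b : ℕ → ℝ}

theorem mono (h : ConcaveUpTo N b) {M : ℕ} (hMN : M ≤ N) : ConcaveUpTo M b :=
  fun i hi => h i (hi.trans hMN)

theorem shift (h : ConcaveUpTo N b) (m : ℕ) : ConcaveUpTo (N - m) (fun i => b (m + i)) :=
  fun i hi => h (m + i) (by omega)

theorem diff_le_diff (h : ConcaveUpTo N b) {s t : ℕ} (hst : s ≤ t) (ht : t < N) :
    b (t + 1) - b t ≤ b (s + 1) - b s := by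
  induction t, hst using Nat.le_induction with
  | base => exact le_rfl
  | succ t hst ih =>
    have := h t (by omega)
    linarith [ih (by omega)]

theorem add_endpoints_le (h : ConcaveUpTo N b) {i : ℕ} (hi : i ≤ N) :
    b 0 + b N ≤ b i + b (N - i) := by
  have hleft : b i - b 0 = ∑ t ∈ range i, (b (t + 1) - b t) := (sum_range_sub b i).symm
  have hright : b N - b (N - i) = ∑ t ∈ range i, (b (N - i + t + 1) - b (N - i + t)) := by
    have := sum_range_sub (fun t => b (N - i + t)) i
    simp only [← add_assoc, Nat.sub_add_cancel hi, add_zero] at this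
    exact this.symm
  have : b N - b (N - i) ≤ b i - b 0 := by
    rw [hleft, hright]
    refine sum_le_sum fun t ht => h.diff_le_diff (by omega) ?_
    rw [mem_range] at ht
    omega
  linarith

theorem mul_add_endpoints_le_sum (h : ConcaveUpTo N b) :
    (N + 1) * (b 0 + b N) ≤ 2 * ∑ i ∈ range (N + 1), b i := by
  calc (N + 1) * (b 0 + b N) = ∑ i ∈ range (N + 1), (b 0 + b N) := by simp [mul_add]
    _ ≤ ∑ i ∈ range (N + 1), (b i + b (N - i)) :=
        sum_le_sum fun i hi => h.add_endpoints_le (Nat.lt_succ_iff.1 (mem_range.1 hi))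
    _ = 2 * ∑ i ∈ range (N + 1), b i := by
        rw [sum_add_distrib, two_mul, ← sum_range_reflect b (N + 1)]
        simp

theorem mul_le_two_mul_sum {n : ℕ} (h : ConcaveUpTo (n + 1) b) (hb0 : b 0 = 0)
    (hbn : b (n + 1) = 0) {m : ℕ} (hm : m ≤ n + 1) :
    (n + 1) * b m ≤ 2 * ∑ i ∈ Icc 1 n, b i := by
  have hleft := (h.mono hm).mul_add_endpoints_le_sum
  have hright := (h.shift m).mul_add_endpoints_le_sum
  have hsplit : ∑ i ∈ range (m + 1), b i + ∑ i ∈ range (n + 1 - m + 1), b (m + i) =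
      b 0 + ∑ i ∈ Icc 1 n, b i + b (n + 1) + b m := by
    have hIcc : ∑ i ∈ Icc 1 n, b i = ∑ i ∈ range n, b (i + 1) := by
      rw [← Ico_add_one_right_eq_Icc, sum_Ico_eq_sum_range]
      simp [add_comm]
    have hall := sum_range_add b m (n + 1 - m + 1)
    rw [show m + (n + 1 - m + 1) = n + 1 + 1 by omega, sum_range_succ, sum_range_succ'] at hall
    rw [sum_range_succ, hIcc]
    linarith
  rw [Nat.add_sub_cancel' hm, add_zero, Nat.cast_sub hm] at hright
  simp only [hb0, hbn] at hleft hright hsplit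
  push_cast at hleft hright
  linarith

end ConcaveUpTo

section Rayleigh

variable {ι : Type*} [Fintype ι]

noncomputable def rayleigh (w x : ι → ℝ) : ℝ := (∑ i, w i * x i ^ 2) / ∑ i, x i ^ 2

theorem sum_sq_pos_of_ne_zero {x : ι → ℝ} (hx : x ≠ 0) : 0 < ∑ i, x i ^ 2 := by
  obtain ⟨i, hi⟩ := Function.ne_iff.mp hx
  exact (pow_two_pos_of_ne_zero hi).trans_le
    (single_le_sum (fun j _ => sq_nonneg (x j)) (mem_univ i))

theorem weighted_sum_sq_lt_of_forall_lt {w : ι → ℝ} {c : ℝ} (hw : ∀ i, w i < c) {x : ι → ℝ}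
    (hx : x ≠ 0) : ∑ i, w i * x i ^ 2 < c * ∑ i, x i ^ 2 := by
  obtain ⟨i, hi⟩ := Function.ne_iff.mp hx
  rw [mul_sum]
  exact sum_lt_sum (fun j _ => mul_le_mul_of_nonneg_right (hw j).le (sq_nonneg _))
    ⟨i, mem_univ i, mul_lt_mul_of_pos_right (hw i) (pow_two_pos_of_ne_zero hi)⟩

theorem rayleigh_smul (w : ι → ℝ) {t : ℝ} (ht : t ≠ 0) (x : ι → ℝ) :
    rayleigh w (t • x) = rayleigh w x := by
  have hnum : ∑ i, w i * (t • x) i ^ 2 = t ^ 2 * ∑ i, w i * x i ^ 2 := by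
    rw [mul_sum]
    exact sum_congr rfl fun i _ => by simp only [Pi.smul_apply, smul_eq_mul]; ring
  have hden : ∑ i, (t • x) i ^ 2 = t ^ 2 * ∑ i, x i ^ 2 := by
    simp only [Pi.smul_apply, smul_eq_mul, mul_pow, mul_sum]
  rw [rayleigh, rayleigh, hnum, hden, mul_div_mul_left _ _ (pow_ne_zero 2 ht)]

theorem exists_ne_zero_sum_eq_zero [Nontrivial ι] : ∃ x : ι → ℝ, x ≠ 0 ∧ ∑ i, x i = 0 := by
  classical
  obtain ⟨i, j, hij⟩ := exists_pair_ne ι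
  refine ⟨Pi.single i 1 - Pi.single j 1, fun h => ?_, by simp⟩
  simpa [hij] using congr_fun h i

theorem exists_isMaxOn_rayleigh [Nontrivial ι] (w : ι → ℝ) :
    ∃ y : ι → ℝ, y ≠ 0 ∧ ∑ i, y i = 0 ∧
      ∀ x : ι → ℝ, x ≠ 0 → ∑ i, x i = 0 → rayleigh w x ≤ rayleigh w y := by
  set K := Metric.sphere (0 : ι → ℝ) 1 ∩ {x | ∑ i, x i = 0}
  have hK : IsCompact K :=
    (isCompact_sphere 0 1).inter_right (isClosed_eq (by fun_prop) continuous_const)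
  have hK0 : ∀ y ∈ K, y ≠ 0 := fun y hy => ne_zero_of_mem_unit_sphere ⟨y, hy.1⟩
  have hnormalize : ∀ x : ι → ℝ, x ≠ 0 → ∑ i, x i = 0 → ‖x‖⁻¹ • x ∈ K := fun x hx hs =>
    ⟨by simp [norm_smul, norm_ne_zero_iff.mpr hx], by simp [← mul_sum, hs]⟩
  have hcont : ContinuousOn (rayleigh w) K :=
    ContinuousOn.div (by fun_prop) (by fun_prop) fun y hy => (sum_sq_pos_of_ne_zero (hK0 y hy)).ne'
  obtain ⟨x₀, hx₀, hs₀⟩ := exists_ne_zero_sum_eq_zero (ι := ι)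
  obtain ⟨y, hy, hmax⟩ := hK.exists_isMaxOn ⟨_, hnormalize x₀ hx₀ hs₀⟩ hcont
  refine ⟨y, hK0 y hy, hy.2, fun x hx hs => ?_⟩
  rw [← rayleigh_smul w (inv_ne_zero (norm_ne_zero_iff.mpr hx))]
  exact hmax (hnormalize x hx hs)

theorem sSup_rayleigh_lt [Nontrivial ι] (w : ι → ℝ) {c : ℝ}
    (h : ∀ x : ι → ℝ, x ≠ 0 → ∑ i, x i = 0 → ∑ i, w i * x i ^ 2 < c * ∑ i, x i ^ 2) :
    sSup {r : ℝ | ∃ x : ι → ℝ, x ≠ 0 ∧ ∑ i, x i = 0 ∧ r = rayleigh w x} < c := by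
  obtain ⟨y, hy, hys, hmax⟩ := exists_isMaxOn_rayleigh w
  refine lt_of_le_of_lt (b := rayleigh w y) (csSup_le ⟨_, y, hy, hys, rfl⟩ ?_)
    ((div_lt_iff₀ (sum_sq_pos_of_ne_zero hy)).2 (h y hy hys))
  rintro _ ⟨x, hx, hs, rfl⟩
  exact hmax x hx hs

end Rayleigh

theorem four_tent_one_lt {x₁ x₂ x₃ x₄ : ℝ} (h : x₁ + x₂ + x₃ + x₄ = 0)
    (hx : 0 < x₁ ^ 2 + x₂ ^ 2 + x₃ ^ 2 + x₄ ^ 2) :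
    2 * (4 * x₁ ^ 2 + 3 * x₂ ^ 2 + 2 * x₃ ^ 2 + x₄ ^ 2) <
      15 / 2 * (x₁ ^ 2 + x₂ ^ 2 + x₃ ^ 2 + x₄ ^ 2) := by
  obtain rfl : x₁ = -(x₂ + x₃ + x₄) := by linarith
  nlinarith [sq_nonneg (x₂ - x₃ - x₄), sq_nonneg (2 * x₃ - x₄), sq_nonneg x₄,
    sq_nonneg (x₂ - x₃), sq_nonneg (x₂ - x₄), sq_nonneg (x₃ - x₄)]

theorem four_tent_two_lt {x₁ x₂ x₃ x₄ : ℝ} (h : x₁ + x₂ + x₃ + x₄ = 0)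
    (hx : 0 < x₁ ^ 2 + x₂ ^ 2 + x₃ ^ 2 + x₄ ^ 2) :
    2 * (3 * x₁ ^ 2 + 6 * x₂ ^ 2 + 4 * x₃ ^ 2 + 2 * x₄ ^ 2) <
      45 / 4 * (x₁ ^ 2 + x₂ ^ 2 + x₃ ^ 2 + x₄ ^ 2) := by
  obtain rfl : x₂ = -(x₁ + x₃ + x₄) := by linarith
  nlinarith [sq_nonneg (x₁ - x₃), sq_nonneg (x₁ - x₄), sq_nonneg (x₃ - x₄), sq_nonneg x₁,
    sq_nonneg x₄]

theorem four_weighted_sum_sq_lt {b₁ b₂ b₃ b₄ : ℝ} (hb₁ : 0 < b₁) (hb₄ : 0 < b₄)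
    (hc₁ : 0 ≤ 2 * b₁ - b₂) (hc₂ : 0 ≤ 2 * b₂ - b₁ - b₃) (hc₃ : 0 ≤ 2 * b₃ - b₂ - b₄)
    (hc₄ : 0 ≤ 2 * b₄ - b₃) {x₁ x₂ x₃ x₄ : ℝ} (h : x₁ + x₂ + x₃ + x₄ = 0)
    (hx : 0 < x₁ ^ 2 + x₂ ^ 2 + x₃ ^ 2 + x₄ ^ 2) :
    2 * (b₁ * x₁ ^ 2 + b₂ * x₂ ^ 2 + b₃ * x₃ ^ 2 + b₄ * x₄ ^ 2) <
      3 / 4 * (b₁ + b₂ + b₃ + b₄) * (x₁ ^ 2 + x₂ ^ 2 + x₃ ^ 2 + x₄ ^ 2) := by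
  -- `gₖ` is the gap of the inequality for the tent `τₖ i = min (k (5 - i)) (i (5 - k))`, and
  -- `5 b = ∑ₖ cₖ τₖ` where `cₖ ≥ 0` are the second differences of `(0, b₁, b₂, b₃, b₄, 0)`.
  set S := x₁ ^ 2 + x₂ ^ 2 + x₃ ^ 2 + x₄ ^ 2 with hS
  set g₁ := 15 / 2 * S - 2 * (4 * x₁ ^ 2 + 3 * x₂ ^ 2 + 2 * x₃ ^ 2 + x₄ ^ 2)
  set g₂ := 45 / 4 * S - 2 * (3 * x₁ ^ 2 + 6 * x₂ ^ 2 + 4 * x₃ ^ 2 + 2 * x₄ ^ 2)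
  set g₃ := 45 / 4 * S - 2 * (2 * x₁ ^ 2 + 4 * x₂ ^ 2 + 6 * x₃ ^ 2 + 3 * x₄ ^ 2) with hg₃
  set g₄ := 15 / 2 * S - 2 * (x₁ ^ 2 + 2 * x₂ ^ 2 + 3 * x₃ ^ 2 + 4 * x₄ ^ 2) with hg₄
  have h₁ : 0 < g₁ := sub_pos.2 (four_tent_one_lt h hx)
  have h₂ : 0 < g₂ := sub_pos.2 (four_tent_two_lt h hx)
  have h₃ : 0 < g₃ := by
    have := four_tent_two_lt (x₁ := x₄) (x₂ := x₃) (x₃ := x₂) (x₄ := x₁) (by linarith) (by linarith)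
    linarith [hg₃, hS]
  have h₄ : 0 < g₄ := by
    have := four_tent_one_lt (x₁ := x₄) (x₂ := x₃) (x₃ := x₂) (x₄ := x₁) (by linarith) (by linarith)
    linarith [hg₄, hS]
  have hdecomp : 5 * (3 / 4 * (b₁ + b₂ + b₃ + b₄) * S -
        2 * (b₁ * x₁ ^ 2 + b₂ * x₂ ^ 2 + b₃ * x₃ ^ 2 + b₄ * x₄ ^ 2)) =
      (2 * b₁ - b₂) * g₁ + (2 * b₂ - b₁ - b₃) * g₂ + (2 * b₃ - b₂ - b₄) * g₃ +
        (2 * b₄ - b₃) * g₄ := by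
    ring
  set g := min (min g₁ g₂) (min g₃ g₄)
  have hg : 0 < g := lt_min (lt_min h₁ h₂) (lt_min h₃ h₄)
  -- the `cₖ` sum to `b₁ + b₄ > 0`
  nlinarith [mul_le_mul_of_nonneg_left ((min_le_left _ _).trans (min_le_left _ _) : g ≤ g₁) hc₁,
    mul_le_mul_of_nonneg_left ((min_le_left _ _).trans (min_le_right _ _) : g ≤ g₂) hc₂,
    mul_le_mul_of_nonneg_left ((min_le_right _ _).trans (min_le_left _ _) : g ≤ g₃) hc₃,
    mul_le_mul_of_nonneg_left ((min_le_right _ _).trans (min_le_right _ _) : g ≤ g₄) hc₄,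
    mul_pos hg (add_pos hb₁ hb₄)]

theorem two_mul_lt_of_five_le {n : ℕ} (hn : 5 ≤ n) {T v : ℝ} (hT : 0 < T)
    (hv : (n + 1) * v ≤ 2 * T) : 2 * v < (n - 1) / n * T := by
  have hn' : (5 : ℝ) ≤ n := by exact_mod_cast hn
  rw [div_mul_eq_mul_div, lt_div_iff₀ (by positivity)]
  have hgap : 0 < ((n : ℝ) ^ 2 - 4 * n - 1) * T := mul_pos (by nlinarith) hT
  nlinarith [mul_le_mul_of_nonneg_left hv (by positivity : (0 : ℝ) ≤ 2 * n)]

theorem two_mul_weighted_sum_sq_lt {n : ℕ} (hn : 4 ≤ n) {b : ℕ → ℝ} (hb0 : b 0 = 0)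
    (hbn : b (n + 1) = 0) (hpos : ∀ i, 1 ≤ i → i ≤ n → 0 < b i) (hconc : ConcaveUpTo (n + 1) b)
    {x : Fin n → ℝ} (hx : x ≠ 0) (hs : ∑ i, x i = 0) :
    2 * ∑ i, b (i.1 + 1) * x i ^ 2 < (n - 1) / n * (∑ i ∈ Icc 1 n, b i) * ∑ i, x i ^ 2 := by
  have hS := sum_sq_pos_of_ne_zero hx
  obtain rfl | h5 := hn.eq_or_lt
  · have c₁ := hconc 0 (by norm_num)
    have c₂ := hconc 1 (by norm_num)
    have c₃ := hconc 2 (by norm_num)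
    have c₄ := hconc 3 (by norm_num)
    norm_num [hb0, hbn] at c₁ c₂ c₃ c₄
    simp only [Fin.sum_univ_four] at hs hS ⊢
    have := four_weighted_sum_sq_lt (b₂ := b 2) (b₃ := b 3) (hpos 1 le_rfl (by norm_num))
      (hpos 4 (by norm_num) le_rfl) (by linarith) (by linarith) (by linarith) (by linarith) hs hS
    rw [show ∑ i ∈ Icc 1 4, b i = b 1 + b 2 + b 3 + b 4 by simp [sum_Icc_succ_top]]
    norm_num
    linarith
  · have hT : 0 < ∑ i ∈ Icc 1 n, b i :=
      sum_pos (fun i hi => hpos i (mem_Icc.1 hi).1 (mem_Icc.1 hi).2) ⟨1, mem_Icc.2 ⟨le_rfl, by omega⟩⟩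
    have := weighted_sum_sq_lt_of_forall_lt (w := fun i : Fin n => 2 * b (i.1 + 1))
      (fun i => two_mul_lt_of_five_le h5 hT (hconc.mul_le_two_mul_sum hb0 hbn (by omega))) hx
    rw [mul_sum]
    simpa only [mul_assoc] using this

/-- De Blassie's condition from concavity: if `n ≥ 4` and the sequence
`(0, σ₁², ..., σₙ², 0)` (given as `b`) is concave with positive interior
entries, then `((n-1)/n) Σ σᵢ² > 2·M₁`, where `M₁` is the supremum of the
constrained Rayleigh quotient over the hyperplane `{Σ xᵢ = 0}`. -/
theorem deBlassie_condition_of_concavity (n : ℕ) (hn : 4 ≤ n) (b : ℕ → ℝ)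
    (hb0 : b 0 = 0) (hbn : b (n + 1) = 0)
    (hpos : ∀ i, 1 ≤ i → i ≤ n → 0 < b i)
    (hconc : ∀ i, i + 2 ≤ n + 1 → b (i + 1) ≥ (b i + b (i + 2)) / 2) :
    (((n : ℝ) - 1) / n) * (∑ i ∈ Finset.Icc 1 n, b i) >
      2 * sSup {r : ℝ | ∃ x : Fin n → ℝ, x ≠ 0 ∧ (∑ i, x i) = 0 ∧
        r = (∑ i, b (i.1 + 1) * (x i) ^ 2) / (∑ i, (x i) ^ 2)} := by
  have : Nontrivial (Fin n) := Fin.nontrivial_iff_two_le.2 (by omega)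
  rw [gt_iff_lt, ← lt_div_iff₀' two_pos]
  refine sSup_rayleigh_lt (fun i : Fin n => b (i.1 + 1)) fun x hx hs => ?_
  have := two_mul_weighted_sum_sq_lt hn hb0 hbn hpos hconc hx hs
  linarith
end
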